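/- Let λ and n be integers with n ≥ λ + 1 ≥ 2, and let G be the simple graph on vertex set {0,…,n−1} in which distinct vertices i and j are adjacent if and only if |i − j| ≤ λ. Then the edge connectivity of G equals λ; that is, every nonempty proper vertex set S ⊆ {0,…,n−1} satisfies |∂S| ≥ λ, and the set S = {0} satisfies |∂S| = λ. -/

import Mathlib

open Classical

noncomputable section

/-- The edge set of `G` as a `Finset` of `Sym2 V`. -/
def edgeFin {V : Type*} [Fintype V] (G : SimpleGraph V) : Finset (Sym2 V) :=
  Finset.univ.filter (fun e => e ∈ G.edgeSet)

/-- The set of edges of `G` with exactly one endpoint in `S` (the cut `(S, V ∖ S)`). -/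
def cutEdges {V : Type*} [Fintype V] (G : SimpleGraph V) (S : Finset V) : Finset (Sym2 V) :=
  Finset.univ.filter (fun e => e ∈ G.edgeSet ∧ ∃ u v, e = s(u, v) ∧ u ∈ S ∧ v ∉ S)

/-- The probability, under independent `Bernoulli(p)` sampling of each element of the
ground set `E`, that the sampled subset satisfies `Q`. -/
def cubePr {β : Type*} [DecidableEq β] (E : Finset β) (p : ℝ) (Q : Finset β → Prop) : ℝ :=
  ∑ S ∈ E.powerset, p ^ S.card * (1 - p) ^ (E.card - S.card) * (if Q S then 1 else 0)

/-- `C` is (the vertex set of) a connected component of `H`. -/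
def IsCompOf {V : Type*} [Fintype V] (H : SimpleGraph V) (C : Finset V) : Prop :=
  ∃ v : V, C = Finset.univ.filter (fun u => H.Reachable v u)

/-- The simple graph on `{0, …, n-1}` in which distinct `i` and `j` are adjacent iff
`|i - j| ≤ λ`. -/
def bandGraph (n lam : ℕ) : SimpleGraph (Fin n) :=
  SimpleGraph.fromRel (fun i j =>
    ((i : ℕ) : ℤ) - ((j : ℕ) : ℤ) ≤ lam ∧ ((j : ℕ) : ℤ) - ((i : ℕ) : ℤ) ≤ lam)

lemma band_adj_iff (n lam : ℕ) (a b : Fin n) :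
    (bandGraph n lam).Adj a b ↔ a ≠ b ∧ (a:ℕ) ≤ (b:ℕ) + lam ∧ (b:ℕ) ≤ (a:ℕ) + lam := by
  simp only [bandGraph, SimpleGraph.fromRel_adj]
  constructor
  · rintro ⟨h1, h2 | h2⟩ <;> refine ⟨h1, ?_, ?_⟩ <;> omega
  · rintro ⟨h1, h2, h3⟩
    exact ⟨h1, Or.inl ⟨by omega, by omega⟩⟩

lemma mem_cutEdges {V : Type*} [Fintype V] {G : SimpleGraph V} {S : Finset V} {e : Sym2 V} :
    e ∈ cutEdges G S ↔ e ∈ G.edgeSet ∧ ∃ u v, e = s(u, v) ∧ u ∈ S ∧ v ∉ S := by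
  simp [cutEdges]

lemma cutEdges_compl {V : Type*} [Fintype V] [DecidableEq V] (G : SimpleGraph V) (S : Finset V) :
    cutEdges G Sᶜ = cutEdges G S := by
  ext e
  simp only [mem_cutEdges, Finset.mem_compl]
  constructor
  · rintro ⟨he, u, v, rfl, hu, hv⟩
    exact ⟨he, v, u, Sym2.eq_swap, by simpa using hv, by simpa using hu⟩
  · rintro ⟨he, u, v, rfl, hu, hv⟩
    exact ⟨he, v, u, Sym2.eq_swap, by simpa using hv, by simpa using hu⟩

lemma exists_boundary (n : ℕ) (S : Finset (Fin n)) (h1 : S.Nonempty) (h2 : S ≠ Finset.univ) :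
    ∃ k, ∃ h : k + 1 < n, ¬ (((⟨k, by omega⟩ : Fin n) ∈ S) ↔ ((⟨k+1, h⟩ : Fin n) ∈ S)) := by
  by_contra hno
  push_neg at hno
  have key : ∀ m, ∀ h : m < n, ((⟨m, h⟩ : Fin n) ∈ S ↔ (⟨0, by omega⟩ : Fin n) ∈ S) := by
    intro m
    induction m with
    | zero => intro h; rfl
    | succ m ih =>
      intro h
      have hm : m < n := by omega
      have := hno m (by omega)
      exact (this.symm).trans (ih hm)
  obtain ⟨i, hi⟩ := h1
  obtain ⟨j, hj⟩ : ∃ j : Fin n, j ∉ S := by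
    by_contra hall
    push_neg at hall
    exact h2 (Finset.eq_univ_iff_forall.2 hall)
  have hi' := (key i i.isLt).1 (by simpa using hi)
  have hj' := fun h => hj (by simpa using (key j j.isLt).2 h)
  exact hj' hi'

lemma key_bound (lam n : ℕ) (hlam : 1 ≤ lam) (hn : lam + 1 ≤ n) (S : Finset (Fin n))
    (k : ℕ) (hk : k + 1 < n)
    (hkS : (⟨k, by omega⟩ : Fin n) ∈ S) (hk1 : (⟨k+1, hk⟩ : Fin n) ∉ S) :
    lam ≤ (cutEdges (bandGraph n lam) S).card := by
  set K : Fin n := ⟨k, by omega⟩ with hK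
  set K1 : Fin n := ⟨k+1, hk⟩ with hK1
  set A : ℕ → Fin n := fun t => (⟨k+1-t, by omega⟩ : Fin n) with hA
  set B : ℕ → Fin n := fun t => (⟨min (max t (k+1)) (n-1), by omega⟩ : Fin n) with hB
  set f : ℕ → Sym2 (Fin n) := fun t =>
    if A t ∈ S then (if B t ∈ S then s(B t, K1) else s(A t, B t))
    else (if B t ∈ S then s(B t, A t) else (if t ≤ k+1 then s(K, A t) else s(K, B t))) with hf
  have hAval : ∀ t, (A t : ℕ) = k + 1 - t := fun t => rfl
  have hBval : ∀ t, t ≤ lam → (B t : ℕ) = max t (k+1) := by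
    intro t ht; simp only [hB]; omega
  have hmem : ∀ u v : Fin n, u ∈ S → v ∉ S → (u:ℕ) ≤ (v:ℕ) + lam → (v:ℕ) ≤ (u:ℕ) + lam →
      s(u, v) ∈ cutEdges (bandGraph n lam) S := by
    intro u v hu hv h1 h2
    refine mem_cutEdges.2 ⟨?_, u, v, rfl, hu, hv⟩
    rw [SimpleGraph.mem_edgeSet, band_adj_iff]
    exact ⟨fun h => hv (h ▸ hu), h1, h2⟩
  -- characterization of f t
  have char : ∀ t, 1 ≤ t → t ≤ lam →
      f t ∈ cutEdges (bandGraph n lam) S ∧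
      ∃ x y : Fin n, f t = s(x, y) ∧
        ((t ≤ k+1 ∧ (x:ℕ) = k+1-t ∧ (y:ℕ) ≤ k+1 ∧ (x:ℕ) < (y:ℕ)) ∨
         (k+2 ≤ t ∧ (y:ℕ) = t ∧ (x:ℕ) ≤ k+1)) := by
    intro t ht1 ht2
    have hBv := hBval t ht2
    have hAv := hAval t
    simp only [hf]
    split_ifs with h1 h2 h2 h3
    · -- A t ∈ S, B t ∈ S : t ≥ k+2, edge (B t, K1)
      have htk : k + 2 ≤ t := by
        by_contra hc
        apply hk1
        have : B t = K1 := by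
          apply Fin.ext; simp only [hBv, hK1]; omega
        rwa [this] at h2
      refine ⟨hmem _ _ h2 hk1 (by simp [hBv, hK1]; omega) (by simp [hBv, hK1]; omega), ?_⟩
      exact ⟨K1, B t, Sym2.eq_swap.symm, Or.inr ⟨htk, by omega, by simp [hK1]⟩⟩
    · -- A t ∈ S, B t ∉ S : crossing edge (A t, B t)
      refine ⟨hmem _ _ h1 h2 (by omega) (by omega), ?_⟩
      by_cases htc : t ≤ k + 1
      · exact ⟨A t, B t, rfl, Or.inl ⟨htc, by omega, by omega, by omega⟩⟩
      · exact ⟨A t, B t, rfl, Or.inr ⟨by omega, by omega, by omega⟩⟩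
    · -- A t ∉ S, B t ∈ S : crossing edge (B t, A t)
      refine ⟨hmem _ _ h2 h1 (by omega) (by omega), ?_⟩
      by_cases htc : t ≤ k + 1
      · exact ⟨A t, B t, Sym2.eq_swap.symm, Or.inl ⟨htc, by omega, by omega, by omega⟩⟩
      · exact ⟨A t, B t, Sym2.eq_swap.symm, Or.inr ⟨by omega, by omega, by omega⟩⟩
    · -- A t ∉ S, B t ∉ S, t ≤ k+1 : edge (K, A t), need t ≥ 2
      have ht2' : 2 ≤ t := by
        by_contra hc
        apply h1
        have : A t = K := by apply Fin.ext; simp only [hAv, hK]; omega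
        rwa [this]
      refine ⟨hmem _ _ hkS h1 (by simp [hK]; omega) (by simp [hK]; omega), ?_⟩
      exact ⟨A t, K, Sym2.eq_swap.symm, Or.inl ⟨h3, by omega, by simp [hK], by simp [hK]; omega⟩⟩
    · -- A t ∉ S, B t ∉ S, t ≥ k+2 : edge (K, B t)
      refine ⟨hmem _ _ hkS h2 (by simp [hK]; omega) (by simp [hK]; omega), ?_⟩
      exact ⟨K, B t, rfl, Or.inr ⟨by omega, by omega, by simp [hK]⟩⟩
  calc lam = (Finset.Icc 1 lam).card := by simp
    _ ≤ (cutEdges (bandGraph n lam) S).card := by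
        apply Finset.card_le_card_of_injOn f
        · intro t ht
          rw [Finset.mem_coe, Finset.mem_Icc] at ht
          exact (char t ht.1 ht.2).1
        · intro t ht t' ht' heq
          rw [Finset.coe_Icc, Set.mem_Icc] at ht ht'
          obtain ⟨-, x, y, hxy, hc⟩ := char t ht.1 ht.2
          obtain ⟨-, x', y', hxy', hc'⟩ := char t' ht'.1 ht'.2
          rw [hxy, hxy', Sym2.eq_iff] at heq
          rcases heq with ⟨e1, e2⟩ | ⟨e1, e2⟩ <;>
            rcases hc with ⟨u1, u2, u3, u4⟩ | ⟨u1, u2, u3⟩ <;>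
            rcases hc' with ⟨v1, v2, v3, v4⟩ | ⟨v1, v2, v3⟩ <;>
            (try subst e1) <;> (try subst e2) <;> omega

lemma part2_eq (lam n : ℕ) (hlam : 1 ≤ lam) (hn : lam + 1 ≤ n) :
    (cutEdges (bandGraph n lam) {(⟨0, Nat.lt_of_lt_of_le (Nat.succ_pos lam) hn⟩ : Fin n)}).card = lam := by
  set v0 : Fin n := ⟨0, by omega⟩ with hv0
  set g : ℕ → Sym2 (Fin n) := fun j => s(v0, (⟨min j (n-1), by omega⟩ : Fin n)) with hg
  have hset : cutEdges (bandGraph n lam) {v0} = (Finset.Icc 1 lam).image g := by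
    ext e
    rw [mem_cutEdges, Finset.mem_image]
    constructor
    · rintro ⟨he, u, v, rfl, hu, hv⟩
      rw [Finset.mem_singleton] at hu hv
      subst hu
      rw [SimpleGraph.mem_edgeSet, band_adj_iff] at he
      refine ⟨(v : ℕ), ?_, ?_⟩
      · rw [Finset.mem_Icc]
        have : (v : ℕ) ≠ 0 := fun h => hv (Fin.ext (by simp [hv0, h]))
        simp [hv0] at he
        omega
      · have hv' : (⟨min (v:ℕ) (n-1), by omega⟩ : Fin n) = v := by
          apply Fin.ext; simp only; have := v.isLt; omega
        simp only [hg, hv']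
    · rintro ⟨j, hj, rfl⟩
      rw [Finset.mem_Icc] at hj
      have hjn : min j (n-1) = j := by omega
      refine ⟨?_, v0, ⟨min j (n-1), by omega⟩, rfl, Finset.mem_singleton_self _, ?_⟩
      · rw [SimpleGraph.mem_edgeSet, band_adj_iff]
        refine ⟨?_, ?_, ?_⟩
        · intro h
          have := congrArg Fin.val h
          simp [hv0] at this
          omega
        · simp [hv0]
        · simp [hv0]; omega
      · rw [Finset.mem_singleton]
        intro h
        have := congrArg Fin.val h
        simp [hv0] at this
        omega
  rw [hset, Finset.card_image_of_injOn, Nat.card_Icc]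
  · omega
  · intro a ha b hb heq
    rw [Finset.coe_Icc, Set.mem_Icc] at ha hb
    simp only [hg, Sym2.eq_iff] at heq
    rcases heq with ⟨e1, e2⟩ | ⟨e1, e2⟩ <;>
      [skip; replace e1 := congrArg Fin.val e1] <;>
      replace e2 := congrArg Fin.val e2 <;>
      simp [hv0] at e1 e2 ⊢ <;> omega

/-- For `n ≥ λ + 1 ≥ 2`, the band graph has edge connectivity
exactly `λ`: every nontrivial cut has at least `λ` edges, and the cut around `{0}` has
exactly `λ` edges. -/
theorem statement15 (lam n : ℕ) (hlam : 1 ≤ lam) (hn : lam + 1 ≤ n) :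
    (∀ S : Finset (Fin n), S.Nonempty → S ≠ Finset.univ →
        lam ≤ (cutEdges (bandGraph n lam) S).card) ∧
      (cutEdges (bandGraph n lam) {(⟨0, by omega⟩ : Fin n)}).card = lam := by
  constructor
  · intro S hS hSu
    obtain ⟨k, hk, hdiff⟩ := exists_boundary n S hS hSu
    by_cases hkS : (⟨k, by omega⟩ : Fin n) ∈ S
    · have hk1 : (⟨k+1, hk⟩ : Fin n) ∉ S := fun h => hdiff ⟨fun _ => h, fun _ => hkS⟩
      exact key_bound lam n hlam hn S k hk hkS hk1
    · have hk1 : (⟨k+1, hk⟩ : Fin n) ∈ S := by tauto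
      rw [← cutEdges_compl]
      exact key_bound lam n hlam hn Sᶜ k hk (by simpa using hkS) (by simpa using hk1)
  · exact part2_eq lam n hlam hn
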